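/- For every odd integer n ≥ 11, the polynomial g(z) = 1 + z³ + z⁷ + z⁸ + z⁹ + z^n is a Newman polynomial of degree n with exactly 5 zeros in the open unit disk and no zeros on the unit circle. -/

import Mathlib

open Polynomial Metric Complex

set_option maxHeartbeats 1000000

/-- Number of zeros of a polynomial in the open unit disk, counted with multiplicity. -/
noncomputable def diskZeros (h : Polynomial ℂ) : ℕ :=
  (h.roots.filter (fun z => ‖z‖ < 1)).card

namespace RoucheAux

lemma mem_sphere_iff_abs (z : ℂ) : z ∈ Metric.sphere (0:ℂ) 1 ↔ ‖z‖ = 1 := by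
  simp [Complex.dist_eq]

lemma integral_inv_sub_out (a : ℂ) (ha : 1 < ‖a‖) :
    (∮ z in C((0:ℂ), 1), (z - a)⁻¹) = 0 := by
  refine Complex.circleIntegral_eq_zero_of_differentiable_on_off_countable zero_le_one
    Set.countable_empty ?_ ?_
  · refine ContinuousOn.inv₀ (by fun_prop) ?_
    intro z hz
    have : ‖z‖ ≤ 1 := by simpa [Complex.dist_eq] using hz
    intro h
    rw [sub_eq_zero] at h
    subst h
    exact absurd ha (not_lt.2 this)
  · intro z hz
    have : ‖z‖ < 1 := by simpa [Complex.dist_eq] using hz.1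
    have hne : z - a ≠ 0 := by
      intro h; rw [sub_eq_zero] at h; subst h; exact absurd ha (not_lt.2 this.le)
    exact ((differentiableAt_id.sub_const a).inv hne)

lemma integral_add' {f g : ℂ → ℂ} {c : ℂ} {R : ℝ} (hf : CircleIntegrable f c R)
    (hg : CircleIntegrable g c R) :
    (∮ z in C(c, R), f z + g z) = (∮ z in C(c, R), f z) + ∮ z in C(c, R), g z := by
  simp only [circleIntegral, smul_add, intervalIntegral.integral_add hf.out hg.out]

lemma AP_multiset (s : Multiset ℂ) (hs : ∀ r ∈ s, ‖r‖ ≠ 1) :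
    (∮ z in C((0:ℂ),1),
      ((s.map fun a => X - C a).prod.derivative.eval z) /
        ((s.map fun a => X - C a).prod.eval z))
    = 2 * Real.pi * I * ((s.filter fun z => ‖z‖ < 1).card : ℂ) := by
  classical
  induction s using Multiset.induction with
  | empty => simp [circleIntegral]
  | cons a t ih =>
    have ha : ‖a‖ ≠ 1 := hs a (Multiset.mem_cons_self a t)
    have ht : ∀ r ∈ t, ‖r‖ ≠ 1 := fun r hr => hs r (Multiset.mem_cons_of_mem hr)
    set Q : Polynomial ℂ := (t.map fun a => X - C a).prod with hQ
    have hQmonic : Q.Monic := monic_multiset_prod_of_monic _ _ (fun a _ => monic_X_sub_C a)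
    have hQne : Q ≠ 0 := hQmonic.ne_zero
    have hQroots : Q.roots = t := roots_multiset_prod_X_sub_C t
    have hprod : ((a ::ₘ t).map fun a => X - C a).prod = (X - C a) * Q := by
      rw [Multiset.map_cons, Multiset.prod_cons]
    have hQsphere : ∀ z ∈ sphere (0:ℂ) 1, Q.eval z ≠ 0 := by
      intro z hz h
      have : z ∈ Q.roots := by rw [mem_roots hQne]; exact h
      rw [hQroots] at this
      exact ht z this (by simpa [Complex.dist_eq] using hz)
    have hasphere : ∀ z ∈ sphere (0:ℂ) 1, z - a ≠ 0 := by
      intro z hz h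
      rw [sub_eq_zero] at h
      exact ha (h ▸ (by simpa [Complex.dist_eq] using hz))
    have heq : Set.EqOn
        (fun z => (((a ::ₘ t).map fun a => X - C a).prod.derivative.eval z) /
          (((a ::ₘ t).map fun a => X - C a).prod.eval z))
        (fun z => (z - a)⁻¹ + (Q.derivative.eval z) / (Q.eval z)) (sphere (0:ℂ) 1) := by
      intro z hz
      have h1 := hQsphere z hz
      have h2 := hasphere z hz
      simp only [hprod, derivative_mul, derivative_sub, derivative_X, derivative_C, sub_zero,
        one_mul, eval_add, eval_mul, eval_sub, eval_X, eval_C]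
      field_simp
    have hc1 : CircleIntegrable (fun z => (z - a)⁻¹) (0:ℂ) 1 := by
      refine ContinuousOn.circleIntegrable zero_le_one ?_
      exact ContinuousOn.inv₀ (by fun_prop) (fun z hz => hasphere z hz)
    have hc2 : CircleIntegrable (fun z => (Q.derivative.eval z) / (Q.eval z)) (0:ℂ) 1 := by
      refine ContinuousOn.circleIntegrable zero_le_one ?_
      exact ContinuousOn.div (by fun_prop) (by fun_prop) (fun z hz => hQsphere z hz)
    rw [circleIntegral.integral_congr zero_le_one heq,
      integral_add' hc1 hc2, ih ht]
    rw [Multiset.filter_cons]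
    by_cases hlt : ‖a‖ < 1
    · rw [circleIntegral.integral_sub_inv_of_mem_ball (by simpa [Complex.dist_eq] using hlt)]
      simp [hlt]
      ring
    · rw [integral_inv_sub_out a (lt_of_le_of_ne (not_lt.1 hlt) (Ne.symm ha))]
      simp [hlt]

lemma slit (u v : ℂ) (h : ‖u - v‖ < ‖u‖ + ‖v‖) :
    v ≠ 0 ∧ u / v ∈ Complex.slitPlane := by
  have hv : v ≠ 0 := by rintro rfl; simp at h
  refine ⟨hv, ?_⟩
  by_contra hmem
  rw [Complex.mem_slitPlane_iff] at hmem
  push_neg at hmem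
  obtain ⟨hre, him⟩ := hmem
  set x := (u / v).re with hx
  have hri : u / v = (x : ℂ) := by
    apply Complex.ext
    · simp [hx]
    · simpa using him
  have hu : u = (x : ℂ) * v := by
    rw [← hri]; field_simp
  have h1 : u - v = ((x - 1 : ℝ) : ℂ) * v := by rw [hu]; push_cast; ring
  have h2 : ‖u - v‖ = (1 - x) * ‖v‖ := by
    rw [h1, norm_mul, Complex.norm_real, Real.norm_eq_abs, abs_of_nonpos (by linarith)]
    ring
  have h3 : ‖u‖ = (-x) * ‖v‖ := by
    rw [hu, norm_mul, Complex.norm_real, Real.norm_eq_abs, abs_of_nonpos hre]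
  rw [h2, h3] at h
  linarith

lemma AP (p : Polynomial ℂ) (hp : ∀ z ∈ sphere (0:ℂ) 1, p.eval z ≠ 0) :
    (∮ z in C((0:ℂ),1), (p.derivative.eval z) / (p.eval z))
      = 2 * Real.pi * I * ((p.roots.filter fun z => ‖z‖ < 1).card : ℂ) := by
  have hp0 : p ≠ 0 := by
    intro h
    exact hp 1 (by simp) (by simp [h])
  have hlc : p.leadingCoeff ≠ 0 := leadingCoeff_ne_zero.2 hp0
  have hsplit : C p.leadingCoeff * (p.roots.map fun a => X - C a).prod = p :=
    C_leadingCoeff_mul_prod_multiset_X_sub_C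
      (splits_iff_card_roots.1 (IsAlgClosed.splits p))
  have hroots : ∀ r ∈ p.roots, ‖r‖ ≠ 1 := by
    intro r hr habs
    exact hp r (by simp [Complex.dist_eq, habs]) ((mem_roots hp0).1 hr)
  have heq : Set.EqOn (fun z => (p.derivative.eval z) / (p.eval z))
      (fun z => (((p.roots.map fun a => X - C a).prod).derivative.eval z) /
        (((p.roots.map fun a => X - C a).prod).eval z)) (sphere (0:ℂ) 1) := by
    intro z _
    have hd : p.derivative = C p.leadingCoeff *
        ((p.roots.map fun a => X - C a).prod).derivative := by
      conv_lhs => rw [← hsplit]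
      rw [derivative_C_mul]
    have hev : p.eval z = p.leadingCoeff *
        (((p.roots.map fun a => X - C a).prod).eval z) := by
      conv_lhs => rw [← hsplit]
      simp [eval_mul]
    have hev' : p.derivative.eval z = p.leadingCoeff *
        ((((p.roots.map fun a => X - C a).prod)).derivative.eval z) := by
      rw [hd]; simp [eval_mul]
    show (p.derivative.eval z) / (p.eval z) = _
    rw [hev', hev, mul_div_mul_left _ _ hlc]
  rw [circleIntegral.integral_congr zero_le_one heq]
  exact AP_multiset p.roots hroots

lemma rouche (p q : Polynomial ℂ)
    (h : ∀ z ∈ sphere (0:ℂ) 1,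
      ‖p.eval z - q.eval z‖ < ‖p.eval z‖ + ‖q.eval z‖) :
    (p.roots.filter fun z => ‖z‖ < 1).card
      = (q.roots.filter fun z => ‖z‖ < 1).card := by
  have hq : ∀ z ∈ sphere (0:ℂ) 1, q.eval z ≠ 0 := by
    intro z hz h0
    have := h z hz
    rw [h0] at this
    simp at this
  have hp : ∀ z ∈ sphere (0:ℂ) 1, p.eval z ≠ 0 := by
    intro z hz h0
    have := h z hz
    rw [h0] at this
    simp at this
  have hzero : (∮ z in C((0:ℂ),1),
      ((p.derivative.eval z)/(p.eval z) - (q.derivative.eval z)/(q.eval z))) = 0 := by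
    apply circleIntegral.integral_eq_zero_of_hasDerivWithinAt
      (f := fun w => Complex.log (p.eval w / q.eval w)) zero_le_one
    intro z hz
    have hpz := hp z hz
    have hqz := hq z hz
    have hslit := (slit _ _ (h z hz)).2
    have hd : HasDerivAt (fun w => p.eval w / q.eval w)
        ((p.derivative.eval z * q.eval z - p.eval z * q.derivative.eval z) / (q.eval z)^2) z :=
      (p.hasDerivAt z).div (q.hasDerivAt z) hqz
    have hlog := (Complex.hasDerivAt_log hslit).comp z hd
    have : (p.eval z / q.eval z)⁻¹ *
        ((p.derivative.eval z * q.eval z - p.eval z * q.derivative.eval z) / (q.eval z)^2)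
        = (p.derivative.eval z)/(p.eval z) - (q.derivative.eval z)/(q.eval z) := by
      field_simp
    rw [this] at hlog
    exact hlog.hasDerivWithinAt
  have hip : CircleIntegrable (fun z => (p.derivative.eval z)/(p.eval z)) (0:ℂ) 1 :=
    ContinuousOn.circleIntegrable zero_le_one
      (ContinuousOn.div (by fun_prop) (by fun_prop) (fun z hz => hp z hz))
  have hiq : CircleIntegrable (fun z => (q.derivative.eval z)/(q.eval z)) (0:ℂ) 1 :=
    ContinuousOn.circleIntegrable zero_le_one
      (ContinuousOn.div (by fun_prop) (by fun_prop) (fun z hz => hq z hz))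
  rw [circleIntegral.integral_sub hip hiq, sub_eq_zero, AP p hp, AP q hq] at hzero
  have hne : (2 * Real.pi * I : ℂ) ≠ 0 := by
    simp [Real.pi_ne_zero, Complex.I_ne_zero, Complex.ofReal_ne_zero]
  have := mul_left_cancel₀ hne hzero
  exact_mod_cast this


noncomputable def wfun (x : ℝ) : ℝ :=
  2 + 2*x - 6*x^2 - 7*x^3 + 11*x^4 + 5*x^5 - 6*x^6 - x^7 + x^8

set_option maxHeartbeats 3000000 in
lemma wfun_pos : ∀ x : ℝ, -2 ≤ x → x ≤ 2 → 0 < wfun x := by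
  intro x h1 h2
  unfold wfun
  rcases le_or_gt x (-3/2) with hc | hc
  · have ha : 0 ≤ x - (-2) := by linarith
    have hb : 0 ≤ (-3/2) - x := by linarith
    nlinarith [mul_nonneg (pow_nonneg ha 0) (pow_nonneg hb 8),
      mul_nonneg (pow_nonneg ha 1) (pow_nonneg hb 7),
      mul_nonneg (pow_nonneg ha 2) (pow_nonneg hb 6),
      mul_nonneg (pow_nonneg ha 3) (pow_nonneg hb 5),
      mul_nonneg (pow_nonneg ha 4) (pow_nonneg hb 4),
      mul_nonneg (pow_nonneg ha 5) (pow_nonneg hb 3),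
      mul_nonneg (pow_nonneg ha 6) (pow_nonneg hb 2),
      mul_nonneg (pow_nonneg ha 7) (pow_nonneg hb 1),
      mul_nonneg (pow_nonneg ha 8) (pow_nonneg hb 0)]
  rcases le_or_gt x (-1) with hc | hc
  · have ha : 0 ≤ x - (-3/2) := by linarith
    have hb : 0 ≤ (-1) - x := by linarith
    nlinarith [mul_nonneg (pow_nonneg ha 0) (pow_nonneg hb 8),
      mul_nonneg (pow_nonneg ha 1) (pow_nonneg hb 7),
      mul_nonneg (pow_nonneg ha 2) (pow_nonneg hb 6),
      mul_nonneg (pow_nonneg ha 3) (pow_nonneg hb 5),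
      mul_nonneg (pow_nonneg ha 4) (pow_nonneg hb 4),
      mul_nonneg (pow_nonneg ha 5) (pow_nonneg hb 3),
      mul_nonneg (pow_nonneg ha 6) (pow_nonneg hb 2),
      mul_nonneg (pow_nonneg ha 7) (pow_nonneg hb 1),
      mul_nonneg (pow_nonneg ha 8) (pow_nonneg hb 0)]
  rcases le_or_gt x (-1/2) with hc | hc
  · have ha : 0 ≤ x - (-1) := by linarith
    have hb : 0 ≤ (-1/2) - x := by linarith
    nlinarith [mul_nonneg (pow_nonneg ha 0) (pow_nonneg hb 8),
      mul_nonneg (pow_nonneg ha 1) (pow_nonneg hb 7),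
      mul_nonneg (pow_nonneg ha 2) (pow_nonneg hb 6),
      mul_nonneg (pow_nonneg ha 3) (pow_nonneg hb 5),
      mul_nonneg (pow_nonneg ha 4) (pow_nonneg hb 4),
      mul_nonneg (pow_nonneg ha 5) (pow_nonneg hb 3),
      mul_nonneg (pow_nonneg ha 6) (pow_nonneg hb 2),
      mul_nonneg (pow_nonneg ha 7) (pow_nonneg hb 1),
      mul_nonneg (pow_nonneg ha 8) (pow_nonneg hb 0)]
  rcases le_or_gt x (0) with hc | hc
  · have ha : 0 ≤ x - (-1/2) := by linarith
    have hb : 0 ≤ (0) - x := by linarith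
    nlinarith [mul_nonneg (pow_nonneg ha 0) (pow_nonneg hb 8),
      mul_nonneg (pow_nonneg ha 1) (pow_nonneg hb 7),
      mul_nonneg (pow_nonneg ha 2) (pow_nonneg hb 6),
      mul_nonneg (pow_nonneg ha 3) (pow_nonneg hb 5),
      mul_nonneg (pow_nonneg ha 4) (pow_nonneg hb 4),
      mul_nonneg (pow_nonneg ha 5) (pow_nonneg hb 3),
      mul_nonneg (pow_nonneg ha 6) (pow_nonneg hb 2),
      mul_nonneg (pow_nonneg ha 7) (pow_nonneg hb 1),
      mul_nonneg (pow_nonneg ha 8) (pow_nonneg hb 0)]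
  rcases le_or_gt x (1/2) with hc | hc
  · have ha : 0 ≤ x - (0) := by linarith
    have hb : 0 ≤ (1/2) - x := by linarith
    nlinarith [mul_nonneg (pow_nonneg ha 0) (pow_nonneg hb 8),
      mul_nonneg (pow_nonneg ha 1) (pow_nonneg hb 7),
      mul_nonneg (pow_nonneg ha 2) (pow_nonneg hb 6),
      mul_nonneg (pow_nonneg ha 3) (pow_nonneg hb 5),
      mul_nonneg (pow_nonneg ha 4) (pow_nonneg hb 4),
      mul_nonneg (pow_nonneg ha 5) (pow_nonneg hb 3),
      mul_nonneg (pow_nonneg ha 6) (pow_nonneg hb 2),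
      mul_nonneg (pow_nonneg ha 7) (pow_nonneg hb 1),
      mul_nonneg (pow_nonneg ha 8) (pow_nonneg hb 0)]
  rcases le_or_gt x (1) with hc | hc
  · have ha : 0 ≤ x - (1/2) := by linarith
    have hb : 0 ≤ (1) - x := by linarith
    nlinarith [mul_nonneg (pow_nonneg ha 0) (pow_nonneg hb 8),
      mul_nonneg (pow_nonneg ha 1) (pow_nonneg hb 7),
      mul_nonneg (pow_nonneg ha 2) (pow_nonneg hb 6),
      mul_nonneg (pow_nonneg ha 3) (pow_nonneg hb 5),
      mul_nonneg (pow_nonneg ha 4) (pow_nonneg hb 4),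
      mul_nonneg (pow_nonneg ha 5) (pow_nonneg hb 3),
      mul_nonneg (pow_nonneg ha 6) (pow_nonneg hb 2),
      mul_nonneg (pow_nonneg ha 7) (pow_nonneg hb 1),
      mul_nonneg (pow_nonneg ha 8) (pow_nonneg hb 0)]
  rcases le_or_gt x (3/2) with hc | hc
  · have ha : 0 ≤ x - (1) := by linarith
    have hb : 0 ≤ (3/2) - x := by linarith
    nlinarith [mul_nonneg (pow_nonneg ha 0) (pow_nonneg hb 8),
      mul_nonneg (pow_nonneg ha 1) (pow_nonneg hb 7),
      mul_nonneg (pow_nonneg ha 2) (pow_nonneg hb 6),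
      mul_nonneg (pow_nonneg ha 3) (pow_nonneg hb 5),
      mul_nonneg (pow_nonneg ha 4) (pow_nonneg hb 4),
      mul_nonneg (pow_nonneg ha 5) (pow_nonneg hb 3),
      mul_nonneg (pow_nonneg ha 6) (pow_nonneg hb 2),
      mul_nonneg (pow_nonneg ha 7) (pow_nonneg hb 1),
      mul_nonneg (pow_nonneg ha 8) (pow_nonneg hb 0)]
  rcases le_or_gt x (7/4) with hc | hc
  · have ha : 0 ≤ x - (3/2) := by linarith
    have hb : 0 ≤ (7/4) - x := by linarith
    nlinarith [mul_nonneg (pow_nonneg ha 0) (pow_nonneg hb 8),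
      mul_nonneg (pow_nonneg ha 1) (pow_nonneg hb 7),
      mul_nonneg (pow_nonneg ha 2) (pow_nonneg hb 6),
      mul_nonneg (pow_nonneg ha 3) (pow_nonneg hb 5),
      mul_nonneg (pow_nonneg ha 4) (pow_nonneg hb 4),
      mul_nonneg (pow_nonneg ha 5) (pow_nonneg hb 3),
      mul_nonneg (pow_nonneg ha 6) (pow_nonneg hb 2),
      mul_nonneg (pow_nonneg ha 7) (pow_nonneg hb 1),
      mul_nonneg (pow_nonneg ha 8) (pow_nonneg hb 0)]
  · have ha : 0 ≤ x - (7/4) := by linarith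
    have hb : 0 ≤ (2) - x := by linarith
    nlinarith [mul_nonneg (pow_nonneg ha 0) (pow_nonneg hb 8),
      mul_nonneg (pow_nonneg ha 1) (pow_nonneg hb 7),
      mul_nonneg (pow_nonneg ha 2) (pow_nonneg hb 6),
      mul_nonneg (pow_nonneg ha 3) (pow_nonneg hb 5),
      mul_nonneg (pow_nonneg ha 4) (pow_nonneg hb 4),
      mul_nonneg (pow_nonneg ha 5) (pow_nonneg hb 3),
      mul_nonneg (pow_nonneg ha 6) (pow_nonneg hb 2),
      mul_nonneg (pow_nonneg ha 7) (pow_nonneg hb 1),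
      mul_nonneg (pow_nonneg ha 8) (pow_nonneg hb 0)]

lemma key_ident (u v : ℂ) (huv : u * v = 1) :
    (1 + u^3 + u^7 + u^8 + u^9) * (1 + v^3 + v^7 + v^8 + v^9)
      = 1 + (1+u)*(1+v) * (2 + 2*(u+v) - 6*(u+v)^2 - 7*(u+v)^3 + 11*(u+v)^4
          + 5*(u+v)^5 - 6*(u+v)^6 - (u+v)^7 + (u+v)^8) := by
  linear_combination ( 2*1 + 4*v^1 - 4*v^2 - 14*v^3 + 4*v^4 + 16*v^5 - v^6 - 8*v^7 - v^8 + 4*u^1 - 4*u^1*v^1 - 33*u^1*v^2 + 6*u^1*v^3 + 59*u^1*v^4 + 9*u^1*v^5 - 28*u^1*v^6 - 7*u^1*v^7 - 4*u^2 - 33*u^2*v^1 + 8*u^2*v^2 + 106*u^2*v^3 + 35*u^2*v^4 - 63*u^2*v^5 - 27*u^2*v^6 + u^2*v^7 + u^2*v^8 - 14*u^3 + 6*u^3*v^1 + 106*u^3*v^2 + 53*u^3*v^3 - 89*u^3*v^4 - 55*u^3*v^5 + 4*u^4 + 59*u^4*v^1 + 35*u^4*v^2 - 89*u^4*v^3 -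 67*u^4*v^4 + 2*u^4*v^5 + u^4*v^6 + 16*u^5 + 9*u^5*v^1 - 63*u^5*v^2 - 55*u^5*v^3 + 2*u^5*v^4 + 3*u^5*v^5 + 2*u^5*v^6 + u^5*v^7 - u^6 - 28*u^6*v^1 - 27*u^6*v^2 + u^6*v^4 + 2*u^6*v^5 + 3*u^6*v^6 + 2*u^6*v^7 + u^6*v^8 - 8*u^7 - 7*u^7*v^1 + u^7*v^2 + u^7*v^5 + 2*u^7*v^6 + 2*u^7*v^7 + u^7*v^8 - u^8 + u^8*v^2 + u^8*v^6 + u^8*v^7 + u^8*v^8 ) * huv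

lemma normSq_f (z : ℂ) (hz : ‖z‖ = 1) :
    Complex.normSq (1 + z^3 + z^7 + z^8 + z^9)
      = 1 + Complex.normSq (1+z) * wfun (2*z.re) := by
  have hz0 : z ≠ 0 := by
    intro h; rw [h] at hz; simp at hz
  have hns : Complex.normSq z = 1 := by
    rw [← Complex.sq_norm, hz]; norm_num
  have hconj : (starRingEnd ℂ) z = z⁻¹ := by
    apply eq_inv_of_mul_eq_one_left
    rw [mul_comm, Complex.mul_conj, hns, Complex.ofReal_one]
  have hre2 : (z.re : ℂ) = (z + z⁻¹)/2 := by
    rw [← hconj, Complex.add_conj]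
    push_cast
    ring
  have h1 : ((Complex.normSq (1+z) : ℝ) : ℂ) = (1+z)*(1+z⁻¹) := by
    rw [← Complex.mul_conj]
    simp [hconj]
  have hC : ((Complex.normSq (1 + z^3 + z^7 + z^8 + z^9) : ℝ) : ℂ)
      = ((1 + Complex.normSq (1+z) * wfun (2*z.re) : ℝ) : ℂ) := by
    rw [← Complex.mul_conj]
    have hconjf : (starRingEnd ℂ) (1 + z^3 + z^7 + z^8 + z^9)
        = 1 + (z⁻¹)^3 + (z⁻¹)^7 + (z⁻¹)^8 + (z⁻¹)^9 := by
      simp [map_add, map_pow, map_one, hconj]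
    rw [hconjf, key_ident z z⁻¹ (mul_inv_cancel₀ hz0)]
    unfold wfun
    push_cast
    rw [hre2, h1]
    ring
  exact_mod_cast hC

noncomputable def r1 : ℂ := -7/8
noncomputable def r2 : ℂ := (11/32) + (49/64)*Complex.I
noncomputable def r3 : ℂ := (11/32) - (49/64)*Complex.I
noncomputable def r4 : ℂ := (13/16) + (13/32)*Complex.I
noncomputable def r5 : ℂ := (13/16) - (13/32)*Complex.I
noncomputable def r6 : ℂ := (-59/64) + (23/32)*Complex.I
noncomputable def r7 : ℂ := (-59/64) - (23/32)*Complex.I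
noncomputable def r8 : ℂ := (-19/64) + (37/32)*Complex.I
noncomputable def r9 : ℂ := (-19/64) - (37/32)*Complex.I

noncomputable def qroots : Multiset ℂ := {r1,r2,r3,r4,r5,r6,r7,r8,r9}
noncomputable def qpoly : Polynomial ℂ := (qroots.map fun a => X - C a).prod

lemma qpoly_roots : qpoly.roots = qroots := roots_multiset_prod_X_sub_C qroots

lemma pair1 (z : ℂ) : (z - r2)*(z - r3) = z^2 - (11/16)*z + 2885/4096 := by
  unfold r2 r3
  linear_combination (-((49/64):ℂ)^2) * Complex.I_sq

lemma pair2 (z : ℂ) : (z - r4)*(z - r5) = z^2 - (13/8)*z + 845/1024 := by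
  unfold r4 r5
  linear_combination (-((13/32):ℂ)^2) * Complex.I_sq

lemma pair3 (z : ℂ) : (z - r6)*(z - r7) = z^2 + (59/32)*z + 5597/4096 := by
  unfold r6 r7
  linear_combination (-((23/32):ℂ)^2) * Complex.I_sq

lemma pair4 (z : ℂ) : (z - r8)*(z - r9) = z^2 + (19/32)*z + 5837/4096 := by
  unfold r8 r9
  linear_combination (-((37/32):ℂ)^2) * Complex.I_sq

lemma qeval (z : ℂ) : qpoly.eval z
    = (z - r1)*((z - r2)*(z - r3))*((z - r4)*(z - r5))*((z - r6)*(z - r7))*((z - r8)*(z - r9)) := by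
  simp only [qpoly, qroots, Multiset.insert_eq_cons, Multiset.map_cons, Multiset.map_singleton,
    Multiset.prod_cons, Multiset.prod_singleton, eval_mul, eval_sub, eval_X, eval_C]
  ring

lemma fq_diff (z : ℂ) : (1 + z^3 + z^7 + z^8 + z^9) - qpoly.eval z
    = (5449061316337/562949953421312) + (2544305886135/70368744177664)*z^1 + (-(94376399/274877906944))*z^2 + (2201160727/68719476736)*z^3 + (576621/16777216)*z^4 + (304085/16777216)*z^5 + (25/1024)*z^6 + (-(23/4096))*z^7 := by
  rw [qeval, pair1, pair2, pair3, pair4]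
  unfold r1
  ring

lemma fq_bound (z : ℂ) (hz : ‖z‖ = 1) :
    ‖(1 + z^3 + z^7 + z^8 + z^9) - qpoly.eval z‖ ≤ 1/2 := by
  rw [fq_diff z]
  have e0 : ‖(5449061316337/562949953421312 : ℂ)‖ = 5449061316337/562949953421312 := by rw [norm_div]; simp [Complex.norm_ofNat]
  have e1 : ‖(2544305886135/70368744177664)*z^1‖ = 2544305886135/70368744177664 := by rw [norm_mul, norm_pow, hz, one_pow, mul_one, norm_div]; simp [Complex.norm_ofNat]
  have e2 : ‖(-(94376399/274877906944))*z^2‖ = (94376399/274877906944) := by rw [norm_mul, norm_pow, hz, one_pow, mul_one, norm_neg, norm_div]; simp [Complex.norm_ofNat]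
  have e3 : ‖(2201160727/68719476736)*z^3‖ = 2201160727/68719476736 := by rw [norm_mul, norm_pow, hz, one_pow, mul_one, norm_div]; simp [Complex.norm_ofNat]
  have e4 : ‖(576621/16777216)*z^4‖ = 576621/16777216 := by rw [norm_mul, norm_pow, hz, one_pow, mul_one, norm_div]; simp [Complex.norm_ofNat]
  have e5 : ‖(304085/16777216)*z^5‖ = 304085/16777216 := by rw [norm_mul, norm_pow, hz, one_pow, mul_one, norm_div]; simp [Complex.norm_ofNat]
  have e6 : ‖(25/1024)*z^6‖ = 25/1024 := by rw [norm_mul, norm_pow, hz, one_pow, mul_one, norm_div]; simp [Complex.norm_ofNat]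
  have e7 : ‖(-(23/4096))*z^7‖ = (23/4096) := by rw [norm_mul, norm_pow, hz, one_pow, mul_one, norm_neg, norm_div]; simp [Complex.norm_ofNat]
  have B : ‖(5449061316337/562949953421312) + (2544305886135/70368744177664)*z^1 + (-(94376399/274877906944))*z^2 + (2201160727/68719476736)*z^3 + (576621/16777216)*z^4 + (304085/16777216)*z^5 + (25/1024)*z^6 + (-(23/4096))*z^7‖ ≤
      (5449061316337/562949953421312) + (2544305886135/70368744177664) + ((94376399/274877906944)) + (2201160727/68719476736) + (576621/16777216) + (304085/16777216) + (25/1024) + ((23/4096)) := by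
    refine le_trans (norm_add_le _ _) (add_le_add ?_ (le_of_eq e7))
    refine le_trans (norm_add_le _ _) (add_le_add ?_ (le_of_eq e6))
    refine le_trans (norm_add_le _ _) (add_le_add ?_ (le_of_eq e5))
    refine le_trans (norm_add_le _ _) (add_le_add ?_ (le_of_eq e4))
    refine le_trans (norm_add_le _ _) (add_le_add ?_ (le_of_eq e3))
    refine le_trans (norm_add_le _ _) (add_le_add ?_ (le_of_eq e2))
    refine le_trans (norm_add_le _ _) (add_le_add ?_ (le_of_eq e1))
    exact le_of_eq e0
  refine le_trans B (by norm_num)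

lemma normSq_r1 : Complex.normSq r1 = 49/64 := by
  have h : r1 = Complex.mk (-7/8) (0) := by
    unfold r1
    apply Complex.ext <;> simp [Complex.div_re, Complex.div_im, Complex.normSq_apply] <;> norm_num
  rw [h]
  simp [Complex.normSq_mk]
  norm_num

lemma normSq_r2 : Complex.normSq r2 = 2885/4096 := by
  have h : r2 = Complex.mk (11/32) (49/64) := by
    unfold r2
    apply Complex.ext <;> simp [Complex.div_re, Complex.div_im, Complex.normSq_apply] <;> norm_num
  rw [h]
  simp [Complex.normSq_mk]
  norm_num

lemma normSq_r3 : Complex.normSq r3 = 2885/4096 := by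
  have h : r3 = Complex.mk (11/32) (-49/64) := by
    unfold r3
    apply Complex.ext <;> simp [Complex.div_re, Complex.div_im, Complex.normSq_apply] <;> norm_num
  rw [h]
  simp [Complex.normSq_mk]
  norm_num

lemma normSq_r4 : Complex.normSq r4 = 845/1024 := by
  have h : r4 = Complex.mk (13/16) (13/32) := by
    unfold r4
    apply Complex.ext <;> simp [Complex.div_re, Complex.div_im, Complex.normSq_apply] <;> norm_num
  rw [h]
  simp [Complex.normSq_mk]
  norm_num

lemma normSq_r5 : Complex.normSq r5 = 845/1024 := by
  have h : r5 = Complex.mk (13/16) (-13/32) := by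
    unfold r5
    apply Complex.ext <;> simp [Complex.div_re, Complex.div_im, Complex.normSq_apply] <;> norm_num
  rw [h]
  simp [Complex.normSq_mk]
  norm_num

lemma normSq_r6 : Complex.normSq r6 = 5597/4096 := by
  have h : r6 = Complex.mk (-59/64) (23/32) := by
    unfold r6
    apply Complex.ext <;> simp [Complex.div_re, Complex.div_im, Complex.normSq_apply] <;> norm_num
  rw [h]
  simp [Complex.normSq_mk]
  norm_num

lemma normSq_r7 : Complex.normSq r7 = 5597/4096 := by
  have h : r7 = Complex.mk (-59/64) (-23/32) := by
    unfold r7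
    apply Complex.ext <;> simp [Complex.div_re, Complex.div_im, Complex.normSq_apply] <;> norm_num
  rw [h]
  simp [Complex.normSq_mk]
  norm_num

lemma normSq_r8 : Complex.normSq r8 = 5837/4096 := by
  have h : r8 = Complex.mk (-19/64) (37/32) := by
    unfold r8
    apply Complex.ext <;> simp [Complex.div_re, Complex.div_im, Complex.normSq_apply] <;> norm_num
  rw [h]
  simp [Complex.normSq_mk]
  norm_num

lemma normSq_r9 : Complex.normSq r9 = 5837/4096 := by
  have h : r9 = Complex.mk (-19/64) (-37/32) := by
    unfold r9
    apply Complex.ext <;> simp [Complex.div_re, Complex.div_im, Complex.normSq_apply] <;> norm_num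
  rw [h]
  simp [Complex.normSq_mk]
  norm_num

lemma abs_lt_one_of_normSq {u : ℂ} (h : Complex.normSq u < 1) : ‖u‖ < 1 := by
  rw [Complex.norm_def, show (1:ℝ) = Real.sqrt 1 by simp]
  exact Real.sqrt_lt_sqrt (Complex.normSq_nonneg u) (by simpa using h)

lemma one_lt_abs_of_normSq {u : ℂ} (h : 1 < Complex.normSq u) : 1 < ‖u‖ := by
  rw [Complex.norm_def]
  calc (1:ℝ) = Real.sqrt 1 := by simp
    _ < _ := Real.sqrt_lt_sqrt (by norm_num) h

lemma abslt_r1 : ‖r1‖ < 1 := abs_lt_one_of_normSq (by rw [normSq_r1]; norm_num)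
lemma abslt_r2 : ‖r2‖ < 1 := abs_lt_one_of_normSq (by rw [normSq_r2]; norm_num)
lemma abslt_r3 : ‖r3‖ < 1 := abs_lt_one_of_normSq (by rw [normSq_r3]; norm_num)
lemma abslt_r4 : ‖r4‖ < 1 := abs_lt_one_of_normSq (by rw [normSq_r4]; norm_num)
lemma abslt_r5 : ‖r5‖ < 1 := abs_lt_one_of_normSq (by rw [normSq_r5]; norm_num)
lemma absgt_r6 : 1 < ‖r6‖ := one_lt_abs_of_normSq (by rw [normSq_r6]; norm_num)
lemma absgt_r7 : 1 < ‖r7‖ := one_lt_abs_of_normSq (by rw [normSq_r7]; norm_num)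
lemma absgt_r8 : 1 < ‖r8‖ := one_lt_abs_of_normSq (by rw [normSq_r8]; norm_num)
lemma absgt_r9 : 1 < ‖r9‖ := one_lt_abs_of_normSq (by rw [normSq_r9]; norm_num)

lemma qroots_offcircle : ∀ r ∈ qroots, ‖r‖ ≠ 1 := by
  intro r hr
  simp only [qroots, Multiset.insert_eq_cons, Multiset.mem_cons, Multiset.mem_singleton] at hr
  rcases hr with h|h|h|h|h|h|h|h|h <;> subst h
  · exact ne_of_lt abslt_r1
  · exact ne_of_lt abslt_r2
  · exact ne_of_lt abslt_r3
  · exact ne_of_lt abslt_r4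
  · exact ne_of_lt abslt_r5
  · exact ne_of_gt absgt_r6
  · exact ne_of_gt absgt_r7
  · exact ne_of_gt absgt_r8
  · exact ne_of_gt absgt_r9

lemma qpoly_diskZeros : diskZeros qpoly = 5 := by
  unfold diskZeros
  rw [qpoly_roots]
  show (Multiset.filter (fun z => ‖z‖ < 1) qroots).card = 5
  simp only [qroots, Multiset.insert_eq_cons, Multiset.filter_cons, Multiset.filter_singleton]
  rw [if_pos abslt_r1, if_pos abslt_r2, if_pos abslt_r3, if_pos abslt_r4, if_pos abslt_r5,
    if_neg (not_lt.2 (le_of_lt absgt_r6)), if_neg (not_lt.2 (le_of_lt absgt_r7)),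
    if_neg (not_lt.2 (le_of_lt absgt_r8)), if_neg (not_lt.2 (le_of_lt absgt_r9))]
  simp



lemma re_interval {z : ℂ} (hz : ‖z‖ = 1) : -2 ≤ 2*z.re ∧ 2*z.re ≤ 2 := by
  have h := Complex.abs_re_le_norm z
  rw [hz] at h
  rw [abs_le] at h
  constructor <;> linarith [h.1, h.2]

lemma f_normSq_ge {z : ℂ} (hz : ‖z‖ = 1) :
    1 ≤ Complex.normSq (1 + z^3 + z^7 + z^8 + z^9) := by
  rw [normSq_f z hz]
  obtain ⟨h1, h2⟩ := re_interval hz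
  nlinarith [wfun_pos (2*z.re) h1 h2, Complex.normSq_nonneg (1+z)]

lemma f_abs_ge {z : ℂ} (hz : ‖z‖ = 1) :
    1 ≤ ‖1 + z^3 + z^7 + z^8 + z^9‖ := by
  have h := f_normSq_ge hz
  rw [Complex.norm_def]
  calc (1:ℝ) = Real.sqrt 1 := by simp
    _ ≤ _ := Real.sqrt_le_sqrt h

lemma f_abs_gt {z : ℂ} (hz : ‖z‖ = 1) (hne : z ≠ -1) :
    1 < ‖1 + z^3 + z^7 + z^8 + z^9‖ := by
  have hz1 : (1:ℂ) + z ≠ 0 := by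
    intro h
    apply hne
    linear_combination h
  have hns : 0 < Complex.normSq (1+z) := by
    rwa [Complex.normSq_pos]
  have hsq : 1 < Complex.normSq (1 + z^3 + z^7 + z^8 + z^9) := by
    rw [normSq_f z hz]
    obtain ⟨h1, h2⟩ := re_interval hz
    nlinarith [wfun_pos (2*z.re) h1 h2]
  exact one_lt_abs_of_normSq hsq

lemma f_eq_one_imp {z : ℂ} (hz : ‖z‖ = 1)
    (h : ‖1 + z^3 + z^7 + z^8 + z^9‖ = 1) : z = -1 := by
  by_contra hne
  exact absurd h (ne_of_gt (f_abs_gt hz hne))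

end RoucheAux

open RoucheAux in
theorem stmt_13 (n : ℕ) (hodd : Odd n) (hn : 11 ≤ n) :
    (∀ j, (1 + X ^ 3 + X ^ 7 + X ^ 8 + X ^ 9 + X ^ n : Polynomial ℂ).coeff j = 0 ∨
        (1 + X ^ 3 + X ^ 7 + X ^ 8 + X ^ 9 + X ^ n : Polynomial ℂ).coeff j = 1) ∧
    (1 + X ^ 3 + X ^ 7 + X ^ 8 + X ^ 9 + X ^ n : Polynomial ℂ).natDegree = n ∧
    diskZeros (1 + X ^ 3 + X ^ 7 + X ^ 8 + X ^ 9 + X ^ n) = 5 ∧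
    ∀ z : ℂ, ‖z‖ = 1 →
      (1 + X ^ 3 + X ^ 7 + X ^ 8 + X ^ 9 + X ^ n : Polynomial ℂ).eval z ≠ 0 := by
  have heval : ∀ z : ℂ, (1 + X ^ 3 + X ^ 7 + X ^ 8 + X ^ 9 + X ^ n : Polynomial ℂ).eval z
      = (1 + z^3 + z^7 + z^8 + z^9) + z^n := by
    intro z
    simp [eval_add, eval_pow, eval_one, eval_X]
  have hfeval : ∀ z : ℂ, (1 + X ^ 3 + X ^ 7 + X ^ 8 + X ^ 9 : Polynomial ℂ).eval z
      = 1 + z^3 + z^7 + z^8 + z^9 := by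
    intro z
    simp [eval_add, eval_pow, eval_one, eval_X]
  -- no zeros on the circle
  have hcirc : ∀ z : ℂ, ‖z‖ = 1 →
      (1 + X ^ 3 + X ^ 7 + X ^ 8 + X ^ 9 + X ^ n : Polynomial ℂ).eval z ≠ 0 := by
    intro z hz h0
    rw [heval z] at h0
    have habs : ‖1 + z^3 + z^7 + z^8 + z^9‖ = 1 := by
      have : (1 + z^3 + z^7 + z^8 + z^9) = -z^n := by linear_combination h0
      rw [this, norm_neg, norm_pow, hz, one_pow]
    have hz1 : z = -1 := f_eq_one_imp hz habs
    subst hz1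
    have hodd' : (-1:ℂ)^n = -1 := Odd.neg_one_pow hodd
    rw [hodd'] at h0
    norm_num at h0
  refine ⟨?_, ?_, ?_, hcirc⟩
  · -- coefficients are 0 or 1
    intro j
    simp only [coeff_add, coeff_one, coeff_X_pow]
    split_ifs <;> first | omega | norm_num
  · -- natDegree = n
    have h9 : (1 + X ^ 3 + X ^ 7 + X ^ 8 + X ^ 9 : Polynomial ℂ).degree ≤ 9 := by
      compute_degree
    have hdlt : (1 + X ^ 3 + X ^ 7 + X ^ 8 + X ^ 9 : Polynomial ℂ).degree
        < (X ^ n : Polynomial ℂ).degree := by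
      rw [degree_X_pow]
      refine lt_of_le_of_lt h9 ?_
      exact_mod_cast (by omega : (9:ℕ) < n)
    rw [natDegree_eq_of_degree_eq (degree_add_eq_right_of_degree_lt hdlt), natDegree_X_pow]
  · -- disk zeros
    have hR1 : diskZeros (1 + X ^ 3 + X ^ 7 + X ^ 8 + X ^ 9 + X ^ n : Polynomial ℂ)
        = diskZeros (1 + X ^ 3 + X ^ 7 + X ^ 8 + X ^ 9 : Polynomial ℂ) := by
      unfold diskZeros
      apply rouche
      intro z hzs
      have hz : ‖z‖ = 1 := (mem_sphere_iff_abs z).1 hzs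
      rw [heval z, hfeval z]
      rw [show ((1 + z^3 + z^7 + z^8 + z^9) + z^n) - (1 + z^3 + z^7 + z^8 + z^9) = z^n from by
        ring]
      rw [norm_pow, hz, one_pow]
      by_cases hne : z = -1
      · subst hne
        have hfv : ((1:ℂ) + (-1)^3 + (-1)^7 + (-1)^8 + (-1)^9) = -1 := by norm_num
        have hgv : ((1:ℂ) + (-1)^3 + (-1)^7 + (-1)^8 + (-1)^9) + (-1)^n = -2 := by
          rw [hfv, Odd.neg_one_pow hodd]; norm_num
        rw [hgv, hfv]
        have ha2 : ‖(-2 : ℂ)‖ = 2 := by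
          rw [norm_neg]; exact Complex.norm_two
        have ha1 : ‖(-1 : ℂ)‖ = 1 := by
          rw [norm_neg]; exact norm_one
        rw [ha2, ha1]
        norm_num
      · have hgt := f_abs_gt hz hne
        have hpos : 0 ≤ ‖(1 + z^3 + z^7 + z^8 + z^9) + z^n‖ :=
          norm_nonneg _
        linarith
    have hR2 : diskZeros (1 + X ^ 3 + X ^ 7 + X ^ 8 + X ^ 9 : Polynomial ℂ)
        = diskZeros qpoly := by
      unfold diskZeros
      apply rouche
      intro z hzs
      have hz : ‖z‖ = 1 := (mem_sphere_iff_abs z).1 hzs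
      rw [hfeval z]
      have hb := fq_bound z hz
      have h1 := f_abs_ge hz
      have h2 : ‖1 + z^3 + z^7 + z^8 + z^9‖
          ≤ ‖(1 + z^3 + z^7 + z^8 + z^9) - qpoly.eval z‖
            + ‖qpoly.eval z‖ := by
        have := norm_add_le ((1 + z^3 + z^7 + z^8 + z^9) - qpoly.eval z) (qpoly.eval z)
        rwa [sub_add_cancel] at this
      linarith
    rw [hR1, hR2, qpoly_diskZeros]
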